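/- arXiv:2509.02365 — 6 statements merged into one kernel-verified Lean document; each statement's English description precedes it below -/
import Mathlib

section
/- Let A be an associative unital ℂ-algebra, let q ∈ ℂ be nonzero, and let x, y, z be invertible elements of A satisfying xy = q²yx, xz = zx, yz = zy. Define K := x, E := q·y·(z − x), and F := y⁻¹·(1 − z⁻¹x⁻¹). Then the quantum sl₂ relations hold: K·E = q²·E·K, K·F = q⁻²·F·K, and E·F − F·E = (q − q⁻¹)·(K − K⁻¹). -/
private lemma conj_aux {A : Type*} [Ring A] (u : Aˣ) (a b : A)
    (h : (u : A) * a = b * (u : A)) : a * (↑u⁻¹ : A) = (↑u⁻¹ : A) * b := by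
  have ha : a = (↑u⁻¹ : A) * (b * (u : A)) := by
    rw [← h, ← mul_assoc, Units.inv_mul, one_mul]
  rw [ha, mul_assoc, mul_assoc, Units.mul_inv, mul_one]

/-- Let `A` be an associative unital ℂ-algebra, `q ∈ ℂ` nonzero, and let
`x, y, z` be invertible elements of `A` satisfying `xy = q²yx`, `xz = zx`, `yz = zy`.
With `K := x`, `E := q·y·(z − x)`, `F := y⁻¹·(1 − z⁻¹x⁻¹)`, the quantum sl₂ relations hold:
`K·E = q²·E·K`, `K·F = q⁻²·F·K`, and `E·F − F·E = (q − q⁻¹)·(K − K⁻¹)`. -/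
theorem stmt_0 (A : Type*) [Ring A] [Algebra ℂ A] (q : ℂ) (hq : q ≠ 0)
    (x y z : Aˣ)
    (hxy : (x : A) * (y : A) = q ^ 2 • ((y : A) * (x : A)))
    (hxz : (x : A) * (z : A) = (z : A) * (x : A))
    (hyz : (y : A) * (z : A) = (z : A) * (y : A)) :
    ((x : A) * (q • ((y : A) * ((z : A) - (x : A)))) =
        q ^ 2 • ((q • ((y : A) * ((z : A) - (x : A)))) * (x : A))) ∧
    ((x : A) * ((↑y⁻¹ : A) * (1 - (↑z⁻¹ : A) * (↑x⁻¹ : A))) =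
        (q ^ 2)⁻¹ • (((↑y⁻¹ : A) * (1 - (↑z⁻¹ : A) * (↑x⁻¹ : A))) * (x : A))) ∧
    ((q • ((y : A) * ((z : A) - (x : A)))) * ((↑y⁻¹ : A) * (1 - (↑z⁻¹ : A) * (↑x⁻¹ : A))) -
        ((↑y⁻¹ : A) * (1 - (↑z⁻¹ : A) * (↑x⁻¹ : A))) * (q • ((y : A) * ((z : A) - (x : A)))) =
        (q - q⁻¹) • ((x : A) - (↑x⁻¹ : A))) := by
  have hq2 : (q ^ 2) ≠ 0 := pow_ne_zero 2 hq
  -- basic commutation with inverses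
  have hxy' : (x : A) * (y : A) = (q ^ 2 • (y : A)) * (x : A) := by
    rw [hxy, smul_mul_assoc]
  have hyx' : (y : A) * (x : A) = ((q ^ 2)⁻¹ • (x : A)) * (y : A) := by
    rw [smul_mul_assoc, hxy, smul_smul, inv_mul_cancel₀ hq2, one_smul]
  -- x * y⁻¹ = (q²)⁻¹ • (y⁻¹ * x)
  have h1 : (x : A) * (↑y⁻¹ : A) = (q ^ 2)⁻¹ • ((↑y⁻¹ : A) * (x : A)) := by
    have := conj_aux y (x : A) ((q ^ 2)⁻¹ • (x : A)) (by rw [← hyx'])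
    rw [this, mul_smul_comm]
  -- x⁻¹ * y = (q²)⁻¹ • (y * x⁻¹)
  have h2 : (↑x⁻¹ : A) * (y : A) = (q ^ 2)⁻¹ • ((y : A) * (↑x⁻¹ : A)) := by
    have h := conj_aux x (y : A) (q ^ 2 • (y : A)) hxy'
    -- h : y * x⁻¹ = x⁻¹ * (q² • y) = q² • (x⁻¹ * y)
    rw [mul_smul_comm] at h
    rw [h, ← smul_assoc, smul_eq_mul, inv_mul_cancel₀ hq2, one_smul]
  have hzxinv : (z : A) * (↑x⁻¹ : A) = (↑x⁻¹ : A) * (z : A) := conj_aux x (z : A) (z : A) hxz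
  have hzyinv : (z : A) * (↑y⁻¹ : A) = (↑y⁻¹ : A) * (z : A) := conj_aux y (z : A) (z : A) hyz
  have hxzinv : (x : A) * (↑z⁻¹ : A) = (↑z⁻¹ : A) * (x : A) := conj_aux z (x : A) (x : A) hxz.symm
  have hyzinv : (y : A) * (↑z⁻¹ : A) = (↑z⁻¹ : A) * (y : A) := conj_aux z (y : A) (y : A) hyz.symm
  refine ⟨?_, ?_, ?_⟩
  · -- K E = q² E K
    have key : (x : A) * ((y : A) * ((z : A) - (x : A)))
        = q ^ 2 • (((y : A) * ((z : A) - (x : A))) * (x : A)) := by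
      rw [← mul_assoc, hxy, smul_mul_assoc, mul_assoc, mul_assoc]
      congr 2
      rw [mul_sub, sub_mul, hxz]
    rw [mul_smul_comm, key, smul_mul_assoc, smul_comm]
  · -- K F = q⁻² F K
    have e1 : (1 - (↑z⁻¹ : A) * (↑x⁻¹ : A)) * (x : A) = (x : A) - (↑z⁻¹ : A) := by
      rw [sub_mul, one_mul, mul_assoc, Units.inv_mul, mul_one]
    have e2 : (x : A) * (1 - (↑z⁻¹ : A) * (↑x⁻¹ : A)) = (x : A) - (↑z⁻¹ : A) := by
      rw [mul_sub, mul_one, ← mul_assoc, hxzinv, mul_assoc, Units.mul_inv, mul_one]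
    rw [mul_assoc, e1, ← mul_assoc, h1, smul_mul_assoc, mul_assoc, e2]
  · -- the Serre-type relation
    have hEF : ((y : A) * ((z : A) - (x : A))) * ((↑y⁻¹ : A) * (1 - (↑z⁻¹ : A) * (↑x⁻¹ : A)))
        = ((z : A) - (↑x⁻¹ : A)) - (q ^ 2)⁻¹ • ((x : A) - (↑z⁻¹ : A)) := by
      have d1 : ((z : A) - (x : A)) * (↑y⁻¹ : A)
          = (↑y⁻¹ : A) * ((z : A) - (q ^ 2)⁻¹ • (x : A)) := by
        rw [sub_mul, hzyinv, h1, mul_sub, mul_smul_comm]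
      rw [mul_assoc, ← mul_assoc ((z : A) - (x : A)), d1, ← mul_assoc, ← mul_assoc,
        Units.mul_inv, one_mul]
      rw [sub_mul, smul_mul_assoc, mul_sub, mul_sub, mul_one, mul_one]
      have z1 : (z : A) * ((↑z⁻¹ : A) * (↑x⁻¹ : A)) = (↑x⁻¹ : A) := by
        rw [← mul_assoc, Units.mul_inv, one_mul]
      have z2 : (x : A) * ((↑z⁻¹ : A) * (↑x⁻¹ : A)) = (↑z⁻¹ : A) := by
        rw [← mul_assoc, hxzinv, mul_assoc, Units.mul_inv, mul_one]
      rw [z1, z2, smul_sub]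
    have hFE : ((↑y⁻¹ : A) * (1 - (↑z⁻¹ : A) * (↑x⁻¹ : A))) * ((y : A) * ((z : A) - (x : A)))
        = ((z : A) - (x : A)) - (q ^ 2)⁻¹ • ((↑x⁻¹ : A) - (↑z⁻¹ : A)) := by
      have d1 : (1 - (↑z⁻¹ : A) * (↑x⁻¹ : A)) * (y : A)
          = (y : A) - (q ^ 2)⁻¹ • ((y : A) * ((↑z⁻¹ : A) * (↑x⁻¹ : A))) := by
        rw [sub_mul, one_mul, mul_assoc, h2, mul_smul_comm,
          ← mul_assoc ((↑z⁻¹ : A)), ← hyzinv, mul_assoc]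
      have c1 : (↑y⁻¹ : A) * ((1 - (↑z⁻¹ : A) * (↑x⁻¹ : A)) * (y : A))
          = 1 - (q ^ 2)⁻¹ • ((↑z⁻¹ : A) * (↑x⁻¹ : A)) := by
        rw [d1, mul_sub, Units.inv_mul, mul_smul_comm, ← mul_assoc, Units.inv_mul, one_mul]
      have z1 : ((↑z⁻¹ : A) * (↑x⁻¹ : A)) * ((z : A) - (x : A))
          = (↑x⁻¹ : A) - (↑z⁻¹ : A) := by
        rw [mul_sub, mul_assoc, ← hzxinv, ← mul_assoc, Units.inv_mul, one_mul,
          mul_assoc, Units.inv_mul, mul_one]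
      rw [← mul_assoc, mul_assoc ((↑y⁻¹ : A)), c1, sub_mul, one_mul, smul_mul_assoc, z1]
    rw [smul_mul_assoc, mul_smul_comm, hEF, hFE, ← smul_sub]
    have hsimp : (((z : A) - (↑x⁻¹ : A)) - (q ^ 2)⁻¹ • ((x : A) - (↑z⁻¹ : A)))
        - (((z : A) - (x : A)) - (q ^ 2)⁻¹ • ((↑x⁻¹ : A) - (↑z⁻¹ : A)))
        = ((x : A) - (↑x⁻¹ : A)) - (q ^ 2)⁻¹ • ((x : A) - (↑x⁻¹ : A)) := by
      rw [smul_sub, smul_sub, smul_sub]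
      abel
    have hqq : q * (q ^ 2)⁻¹ = q⁻¹ := by field_simp
    rw [hsimp, smul_sub, ← smul_assoc, smul_eq_mul, hqq, sub_smul]
end

section
/- Let A be an associative unital ℂ-algebra, let q ∈ ℂ be nonzero, and let x, y, z be invertible elements of A satisfying xy = q²yx, xz = zx, yz = zy. Define E := q·y·(z − x) and F := y⁻¹·(1 − z⁻¹x⁻¹). Then the image of the Casimir element satisfies E·F + q⁻¹·x + q·x⁻¹ = q·z + q⁻¹·z⁻¹. -/
/-- Let `A` be an associative unital ℂ-algebra, `q ∈ ℂ` nonzero, and let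
`x, y, z` be invertible elements of `A` satisfying `xy = q²yx`, `xz = zx`, `yz = zy`.
With `E := q·y·(z − x)` and `F := y⁻¹·(1 − z⁻¹x⁻¹)`, the image of the Casimir element
satisfies `E·F + q⁻¹·x + q·x⁻¹ = q·z + q⁻¹·z⁻¹`. -/
theorem stmt_1 (A : Type*) [Ring A] [Algebra ℂ A] (q : ℂ) (hq : q ≠ 0)
    (x y z : Aˣ)
    (hxy : (x : A) * (y : A) = q ^ 2 • ((y : A) * (x : A)))
    (hxz : (x : A) * (z : A) = (z : A) * (x : A))
    (hyz : (y : A) * (z : A) = (z : A) * (y : A)) :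
    (q • ((y : A) * ((z : A) - (x : A)))) * ((↑y⁻¹ : A) * (1 - (↑z⁻¹ : A) * (↑x⁻¹ : A)))
        + q⁻¹ • (x : A) + q • (↑x⁻¹ : A)
      = q • (z : A) + q⁻¹ • (↑z⁻¹ : A) := by
  have hxz' : (x : A) * ↑z⁻¹ = (↑z⁻¹ : A) * x := by
    calc (x : A) * ↑z⁻¹ = ↑z⁻¹ * ((z : A) * x) * ↑z⁻¹ := by
          rw [← mul_assoc, z.inv_mul, one_mul]
      _ = ↑z⁻¹ * ((x : A) * z) * ↑z⁻¹ := by rw [hxz]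
      _ = (↑z⁻¹ : A) * x := by rw [mul_assoc, mul_assoc, z.mul_inv, mul_one]
  have hq2 : (q ^ 2)⁻¹ • ((x : A) * y) = (y : A) * x := by
    rw [hxy, smul_smul, inv_mul_cancel₀ (pow_ne_zero 2 hq), one_smul]
  have key : (y : A) * x * ↑y⁻¹ = (q ^ 2)⁻¹ • (x : A) := by
    rw [← hq2, smul_mul_assoc, mul_assoc, y.mul_inv, mul_one]
  have keyz : (y : A) * z * ↑y⁻¹ = (z : A) := by
    rw [hyz, mul_assoc, y.mul_inv, mul_one]
  have hM : (y : A) * ((z : A) - x) * ↑y⁻¹ = (z : A) - (q ^ 2)⁻¹ • (x : A) := by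
    rw [mul_sub, sub_mul, key, keyz]
  have expand :
      ((z : A) - (q ^ 2)⁻¹ • (x : A)) * (1 - (↑z⁻¹ : A) * ↑x⁻¹)
        = (z : A) - ↑x⁻¹ - (q ^ 2)⁻¹ • (x : A) + (q ^ 2)⁻¹ • (↑z⁻¹ : A) := by
    have h1 : (z : A) * ((↑z⁻¹ : A) * ↑x⁻¹) = (↑x⁻¹ : A) := by
      rw [← mul_assoc, z.mul_inv, one_mul]
    have h2 : (x : A) * ((↑z⁻¹ : A) * ↑x⁻¹) = (↑z⁻¹ : A) := by
      rw [← mul_assoc, hxz', mul_assoc, x.mul_inv, mul_one]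
    rw [sub_mul, mul_sub, mul_sub, mul_one, mul_one, smul_mul_assoc, h1, h2]
    abel
  have hfirst :
      (q • ((y : A) * ((z : A) - x))) * ((↑y⁻¹ : A) * (1 - (↑z⁻¹ : A) * ↑x⁻¹))
        = q • (((y : A) * ((z : A) - x) * ↑y⁻¹) * (1 - (↑z⁻¹ : A) * ↑x⁻¹)) := by
    rw [smul_mul_assoc, ← mul_assoc]
  rw [hfirst, hM, expand]
  have hqq : q * (q ^ 2)⁻¹ = q⁻¹ := by field_simp
  rw [smul_add, smul_sub, smul_sub, smul_smul, smul_smul, hqq]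
  abel
end

section
/- Fix an integer N ≥ 2, set ω := exp(2πi/N), and for x ∈ ℂ write ω^x := exp(2πi x/N). Fix α₁, α₂, β, μ ∈ ℂ. Let V be the ℂ-vector space with basis {e(k₁,k₂,l,p,n)} indexed by (k₁,k₂,l,p) ∈ ℤ⁴ and n ∈ ℤ/N. Define linear operators T₁, T₂, T₃, T₄ on V by: T₁·e(k₁,k₂,l,p,n) = ω^{(β+l)/2 + n}·e(k₁+1,k₂,l,p,n); T₂·e(k₁,k₂,l,p,n) = ω^{−(β+l+μ+Np)/2 − n}·e(k₁,k₂+1,l,p,n); T₃·e(k₁,k₂,l,p,n) = ω^{(α₂+k₂−α₁−k₁)/2}·e(k₁,k₂,l+1,p,n−1); T₄·e(k₁,k₂,l,p,n) = ω^{N(α₂+k₂)/2}·e(k₁,k₂,l,p+1,n) (in the exponents, n denotes any integer representative of the class n ∈ ℤ/N; the phases are well defined since ω^N = 1). Then T₁, T₂, T₃, T₄ pairwise commute. -/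
/-- `ww N x = ω^x := exp(2πi x/N)`, where `ω = exp(2πi/N)`. -/
noncomputable def ww (N : ℕ) (x : ℂ) : ℂ :=
  Complex.exp (2 * (Real.pi : ℂ) * Complex.I * x / N)

/-- The linear operator on `I → ℂ` acting on coordinates by `(shiftOp c s f) i = c i * f (s i)`;
on basis vectors it acts by `e_j ↦ ∑_{i : s i = j} c i • e_i`. -/
noncomputable def shiftOp {I : Type*} (c : I → ℂ) (s : I → I) :
    Module.End ℂ (I → ℂ) where
  toFun f := fun i => c i * f (s i)
  map_add' f g := by funext i; simp [mul_add]
  map_smul' a f := by funext i; simp [smul_eq_mul]; ring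

/-- The index set of the basis `e(k₁,k₂,l,p,n)`, `(k₁,k₂,l,p) ∈ ℤ⁴`, `n ∈ ℤ/N`. -/
abbrev Idx (N : ℕ) := ℤ × ℤ × ℤ × ℤ × ZMod N

/-- `T₁ · e(k₁,k₂,l,p,n) = ω^{(β+l)/2 + n} · e(k₁+1,k₂,l,p,n)`. -/
noncomputable def T1 (N : ℕ) (β : ℂ) : Module.End ℂ (Idx N → ℂ) :=
  shiftOp (fun x => ww N ((β + x.2.2.1) / 2 + x.2.2.2.2.val))
    (fun x => (x.1 - 1, x.2.1, x.2.2.1, x.2.2.2.1, x.2.2.2.2))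

/-- `T₂ · e(k₁,k₂,l,p,n) = ω^{−(β+l+μ+Np)/2 − n} · e(k₁,k₂+1,l,p,n)`. -/
noncomputable def T2 (N : ℕ) (β μ : ℂ) : Module.End ℂ (Idx N → ℂ) :=
  shiftOp (fun x => ww N (-((β + x.2.2.1 + μ + N * x.2.2.2.1) / 2) - x.2.2.2.2.val))
    (fun x => (x.1, x.2.1 - 1, x.2.2.1, x.2.2.2.1, x.2.2.2.2))

/-- `T₃ · e(k₁,k₂,l,p,n) = ω^{(α₂+k₂−α₁−k₁)/2} · e(k₁,k₂,l+1,p,n−1)`. -/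
noncomputable def T3 (N : ℕ) (α₁ α₂ : ℂ) : Module.End ℂ (Idx N → ℂ) :=
  shiftOp (fun x => ww N ((α₂ + x.2.1 - α₁ - x.1) / 2))
    (fun x => (x.1, x.2.1, x.2.2.1 - 1, x.2.2.2.1, x.2.2.2.2 + 1))

/-- `T₄ · e(k₁,k₂,l,p,n) = ω^{N(α₂+k₂)/2} · e(k₁,k₂,l,p+1,n)`. -/
noncomputable def T4 (N : ℕ) (α₂ : ℂ) : Module.End ℂ (Idx N → ℂ) :=
  shiftOp (fun x => ww N (N * (α₂ + x.2.1) / 2))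
    (fun x => (x.1, x.2.1, x.2.2.1, x.2.2.2.1 - 1, x.2.2.2.2))

lemma ww_add (N : ℕ) (x y : ℂ) : ww N (x + y) = ww N x * ww N y := by
  unfold ww
  rw [← Complex.exp_add]
  ring_nf

lemma ww_int_mul (N : ℕ) (m : ℤ) (hN : (N : ℂ) ≠ 0) : ww N (N * m) = 1 := by
  unfold ww
  rw [show 2 * (Real.pi : ℂ) * Complex.I * (N * m) / N = m * (2 * Real.pi * Complex.I) by
    field_simp]
  exact Complex.exp_int_mul_two_pi_mul_I m

lemma ww_congr (N : ℕ) (hN : (N : ℂ) ≠ 0) (a b : ℂ) (m : ℤ) (h : a = b + N * m) :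
    ww N a = ww N b := by
  rw [h, ww_add, ww_int_mul N m hN, mul_one]

lemma zmod_val_succ (N : ℕ) [NeZero N] (n : ZMod N) :
    ∃ m : ℤ, (((n + 1 : ZMod N).val : ℂ)) = (n.val : ℂ) + 1 + N * m := by
  obtain ⟨m, hm⟩ : (N : ℤ) ∣ ((n + 1 : ZMod N).val - (n.val + 1) : ℤ) := by
    rw [← ZMod.intCast_zmod_eq_zero_iff_dvd]
    push_cast
    simp [ZMod.natCast_val, ZMod.intCast_cast]
  refine ⟨m, ?_⟩
  have : ((n + 1 : ZMod N).val : ℤ) = (n.val + 1 : ℤ) + N * m := by linarith [hm]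
  have := congrArg (fun z : ℤ => (z : ℂ)) this
  push_cast at this
  linear_combination this

lemma shiftOp_comm {I : Type*} (c c' : I → ℂ) (s s' : I → I)
    (hs : ∀ i, s' (s i) = s (s' i))
    (hc : ∀ i, c i * c' (s i) = c' i * c (s' i)) :
    shiftOp c s * shiftOp c' s' = shiftOp c' s' * shiftOp c s := by
  ext f i
  show c i * (c' (s i) * f (s' (s i))) = c' i * (c (s' i) * f (s (s' i)))
  rw [hs, ← mul_assoc, ← mul_assoc, hc]

/-- Fix `N ≥ 2`, `ω := exp(2πi/N)`, and `α₁, α₂, β, μ ∈ ℂ`. On the space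
with basis `{e(k₁,k₂,l,p,n)}`, `(k₁,k₂,l,p) ∈ ℤ⁴`, `n ∈ ℤ/N`, the operators
`T₁·e(k₁,k₂,l,p,n) = ω^{(β+l)/2 + n}·e(k₁+1,k₂,l,p,n)`,
`T₂·e(k₁,k₂,l,p,n) = ω^{−(β+l+μ+Np)/2 − n}·e(k₁,k₂+1,l,p,n)`,
`T₃·e(k₁,k₂,l,p,n) = ω^{(α₂+k₂−α₁−k₁)/2}·e(k₁,k₂,l+1,p,n−1)`,
`T₄·e(k₁,k₂,l,p,n) = ω^{N(α₂+k₂)/2}·e(k₁,k₂,l,p+1,n)`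
pairwise commute. -/
theorem stmt_6 (N : ℕ) (hN : 2 ≤ N) (α₁ α₂ β μ : ℂ) :
    (T1 N β * T2 N β μ = T2 N β μ * T1 N β) ∧
    (T1 N β * T3 N α₁ α₂ = T3 N α₁ α₂ * T1 N β) ∧
    (T1 N β * T4 N α₂ = T4 N α₂ * T1 N β) ∧
    (T2 N β μ * T3 N α₁ α₂ = T3 N α₁ α₂ * T2 N β μ) ∧
    (T2 N β μ * T4 N α₂ = T4 N α₂ * T2 N β μ) ∧
    (T3 N α₁ α₂ * T4 N α₂ = T4 N α₂ * T3 N α₁ α₂) := by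
  have hN0 : N ≠ 0 := by omega
  haveI : NeZero N := ⟨hN0⟩
  have hNc : (N : ℂ) ≠ 0 := Nat.cast_ne_zero.mpr hN0
  refine ⟨?_, ?_, ?_, ?_, ?_, ?_⟩
  · exact shiftOp_comm _ _ _ _ (fun i => rfl) (fun i => mul_comm _ _)
  · -- T1 T3
    refine shiftOp_comm _ _ _ _ (fun i => rfl) (fun i => ?_)
    obtain ⟨m, hm⟩ := zmod_val_succ N i.2.2.2.2
    rw [← ww_add, ← ww_add]
    refine ww_congr N hNc _ _ (-m) ?_
    dsimp only
    rw [hm]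
    push_cast
    ring
  · exact shiftOp_comm _ _ _ _ (fun i => rfl) (fun i => mul_comm _ _)
  · -- T2 T3
    refine shiftOp_comm _ _ _ _ (fun i => rfl) (fun i => ?_)
    obtain ⟨m, hm⟩ := zmod_val_succ N i.2.2.2.2
    rw [← ww_add, ← ww_add]
    refine ww_congr N hNc _ _ m ?_
    dsimp only
    rw [hm]
    push_cast
    ring
  · -- T2 T4
    refine shiftOp_comm _ _ _ _ (fun i => rfl) (fun i => ?_)
    rw [← ww_add, ← ww_add]
    refine ww_congr N hNc _ _ (-1) ?_
    dsimp only
    push_cast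
    ring
  · exact shiftOp_comm _ _ _ _ (fun i => rfl) (fun i => mul_comm _ _)
end

section
/- Fix an integer N ≥ 2, set ω := exp(2πi/N), and for x ∈ ℂ write ω^x := exp(2πi x/N). Let ζ⁰, ζ¹ ∈ ℂ satisfy the flattening condition exp(2πi ζ⁰) + exp(−2πi ζ¹) = 1. Suppose g : ℤ → ℂ satisfies the recurrence g(n+1)·(1 − ω^{ζ⁰+n+1}) = g(n) for all n ∈ ℤ (note that 1 − ω^{ζ⁰+m} ≠ 0 for every integer m, since exp(2πiζ⁰) ≠ 1). Define ψ(n) := ω^{−ζ⁰ζ¹/2}·ω^{−n ζ¹}·g(n). Then ψ is N-periodic: ψ(n + N) = ψ(n) for all n ∈ ℤ. -/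
lemma ww_pow_nat (N : ℕ) (hN : N ≠ 0) (x : ℂ) :
    ww N x ^ N = Complex.exp (2 * (Real.pi : ℂ) * Complex.I * x) := by
  rw [ww, ← Complex.exp_nat_mul]
  congr 1
  rw [mul_div_assoc']
  exact mul_div_cancel_left₀ _ (Nat.cast_ne_zero.mpr hN)

/-- the roots of unity factorization: `∏_{k<N} (x - ω^k · y) = x^N - y^N` for `ω = exp(2πi/N)`. -/
lemma prod_range_one_sub (N : ℕ) (hN : N ≠ 0) (x : ℂ) :
    ∏ k ∈ Finset.range N, (1 - ww N k * x) = 1 - x ^ N := by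
  have hprim := Complex.isPrimitiveRoot_exp N hN
  have hpos : 0 < N := Nat.pos_of_ne_zero hN
  have himg : Polynomial.nthRootsFinset N (1 : ℂ) =
      (Finset.range N).image (fun k => Complex.exp (2 * Real.pi * Complex.I / N) ^ k) := by
    symm
    apply Finset.eq_of_subset_of_card_le
    · intro z hz
      simp only [Finset.mem_image, Finset.mem_range] at hz
      obtain ⟨k, _, rfl⟩ := hz
      rw [Polynomial.mem_nthRootsFinset hpos, ← pow_mul, mul_comm k N, pow_mul,
        hprim.pow_eq_one, one_pow]
    · rw [hprim.card_nthRootsFinset, Finset.card_image_of_injOn, Finset.card_range]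
      intro i hi j hj hij
      exact hprim.pow_inj (Finset.mem_range.mp hi) (Finset.mem_range.mp hj) hij
  have key := hprim.pow_sub_pow_eq_prod_sub_mul (x := (1:ℂ)) (y := x) hpos
  rw [one_pow, himg, Finset.prod_image (fun i hi j hj hij =>
    hprim.pow_inj (Finset.mem_range.mp hi) (Finset.mem_range.mp hj) hij)] at key
  rw [key]
  apply Finset.prod_congr rfl
  intro k _
  congr 2
  rw [ww, ← Complex.exp_nat_mul]
  congr 1
  ring

/-- Fix `N ≥ 2`, `ω := exp(2πi/N)`. Let `ζ⁰, ζ¹ ∈ ℂ` satisfy the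
flattening condition `exp(2πi ζ⁰) + exp(−2πi ζ¹) = 1`, and let `g : ℤ → ℂ` satisfy the
recurrence `g(n+1)·(1 − ω^{ζ⁰+n+1}) = g(n)` for all `n`. Then the cyclic quantum dilogarithm
`ψ(n) := ω^{−ζ⁰ζ¹/2}·ω^{−n ζ¹}·g(n)` is `N`-periodic: `ψ(n + N) = ψ(n)` for all `n ∈ ℤ`. -/
theorem stmt_11 (N : ℕ) (hN : 2 ≤ N) (ζ₀ ζ₁ : ℂ)
    (hflat : Complex.exp (2 * (Real.pi : ℂ) * Complex.I * ζ₀) +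
      Complex.exp (-(2 * (Real.pi : ℂ) * Complex.I * ζ₁)) = 1)
    (g : ℤ → ℂ)
    (hg : ∀ n : ℤ, g (n + 1) * (1 - ww N (ζ₀ + n + 1)) = g n) :
    ∀ n : ℤ,
      ww N (-(ζ₀ * ζ₁) / 2) * ww N (-((n : ℂ) + N) * ζ₁) * g (n + N) =
      ww N (-(ζ₀ * ζ₁) / 2) * ww N (-(n : ℂ) * ζ₁) * g n := by
  have hN0 : N ≠ 0 := by omega
  have hNc : (N : ℂ) ≠ 0 := Nat.cast_ne_zero.mpr hN0
  intro n
  -- iterated recurrence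
  have hiter : ∀ m : ℕ,
      g (n + m) * ∏ k ∈ Finset.range m, (1 - ww N (ζ₀ + n + 1 + k)) = g n := by
    intro m
    induction m with
    | zero => simp
    | succ m ih =>
      rw [Finset.prod_range_succ, ← ih]
      have h1 := hg (n + m)
      push_cast at h1
      rw [show (ζ₀ + ((n : ℂ) + (m : ℂ)) + 1) = ζ₀ + (n : ℂ) + 1 + (m : ℂ) from by ring] at h1
      rw [show n + ((m + 1 : ℕ) : ℤ) = n + (m : ℤ) + 1 from by push_cast; ring]
      linear_combination (∏ k ∈ Finset.range m, (1 - ww N (ζ₀ + (n : ℂ) + 1 + (k : ℂ)))) * h1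
  have hiterN := hiter N
  -- compute the product
  have hprod : ∏ k ∈ Finset.range N, (1 - ww N (ζ₀ + n + 1 + k)) =
      Complex.exp (-(2 * (Real.pi : ℂ) * Complex.I * ζ₁)) := by
    have : ∀ k ∈ Finset.range N, (1 - ww N (ζ₀ + (n : ℂ) + 1 + k)) =
        (1 - ww N k * ww N (ζ₀ + n + 1)) := by
      intro k _
      rw [show ζ₀ + (n : ℂ) + 1 + k = (k : ℂ) + (ζ₀ + n + 1) by ring, ww_add]
    rw [Finset.prod_congr rfl this, prod_range_one_sub N hN0,
      ww_pow_nat N hN0]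
    have hper : Complex.exp (2 * (Real.pi : ℂ) * Complex.I * (ζ₀ + n + 1)) =
        Complex.exp (2 * (Real.pi : ℂ) * Complex.I * ζ₀) := by
      rw [mul_add, mul_add, Complex.exp_add, Complex.exp_add]
      have h1 : Complex.exp (2 * (Real.pi : ℂ) * Complex.I * (n : ℂ)) = 1 := by
        have := Complex.exp_int_mul_two_pi_mul_I n
        rw [← this]; congr 1; ring
      have h2 : Complex.exp (2 * (Real.pi : ℂ) * Complex.I * 1) = 1 := by
        rw [mul_one]; exact Complex.exp_two_pi_mul_I
      rw [h1, h2, mul_one, mul_one]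
    rw [hper]
    linear_combination -hflat
  -- the extra factor
  have hfac : ww N (-((n : ℂ) + N) * ζ₁) =
      ww N (-(n : ℂ) * ζ₁) * Complex.exp (-(2 * (Real.pi : ℂ) * Complex.I * ζ₁)) := by
    rw [show -((n : ℂ) + N) * ζ₁ = -(n : ℂ) * ζ₁ + (-(N : ℂ) * ζ₁) by ring, ww_add]
    congr 1
    rw [ww]
    congr 1
    field_simp
  rw [hfac, ← hiterN, hprod]
  ring
end

section
/- Let g₁, g₂ ∈ SL₂(ℂ), let m₁, m₂ ∈ ℂ be nonzero, and let v₁, v₂ be nonzero row vectors in ℂ² with v₁·g₁ = m₁⁻¹·v₁ and v₂·g₂ = m₂⁻¹·v₂. Let u ∈ ℂ² be a column vector and set u_N := u, u_W := g₁·u, u_S := g₂·g₁·u, u_E := g₁⁻¹·g₂·g₁·u, and v_{2'} := v₂·g₁. Define region parameters a_P := (u_P)₁ (the first coordinate) for P ∈ {N, W, S, E}, segment parameters b₁ := −(v₁)₂/(v₁·u_N), b₂ := −(v₂)₂/(v₂·u_W), b_{1'} := −(v₁)₂/(v₁·u_E), b_{2'} := −(v_{2'})₂/(v_{2'}·u_N),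 and ratios a₁ := a_W/a_N, a₂ := a_S/a_W. Assume all of a_N, a_W, a_S, a_E, b₁, b₂, b_{1'}, b_{2'} are defined (nonzero denominators) and nonzero. Then: (i) b_{1'}·(1 − m₂·a₂·(1 − b₂/(m₁·b₁))) = m₂·b₂/m₁; (ii) b_{2'} = b₁·(1 − (m₁/a₁)·(1 − b₂/(m₁·b₁))); (iii) a_E = a_W⁻¹·( a_N·a_S − (m₁·b₁/b₂)·(a_N − a_W/m₁)·(a_S − a_W/m₂) ). -/
open Matrix

set_option maxHeartbeats 1000000 in
/-- The octahedral-coordinate relations at a positive crossing of a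
shadow-colored tangle diagram, in terms of the region parameters `a_P := (u_P)₁`,
segment parameters `b := −(v)₂/(v·u)`, and meridian parameters `m₁, m₂`. -/
theorem stmt_12 (g₁ g₂ : Matrix (Fin 2) (Fin 2) ℂ)
    (hg₁ : g₁.det = 1) (hg₂ : g₂.det = 1)
    (m₁ m₂ : ℂ) (hm₁ : m₁ ≠ 0) (hm₂ : m₂ ≠ 0)
    (v₁ v₂ : Fin 2 → ℂ) (hv₁ : v₁ ≠ 0) (hv₂ : v₂ ≠ 0)
    (hev₁ : v₁ ᵥ* g₁ = m₁⁻¹ • v₁) (hev₂ : v₂ ᵥ* g₂ = m₂⁻¹ • v₂)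
    (u : Fin 2 → ℂ)
    -- the shadow colors of the four regions around the crossing
    (uN uW uS uE : Fin 2 → ℂ)
    (huN : uN = u) (huW : uW = g₁ *ᵥ u) (huS : uS = g₂ *ᵥ (g₁ *ᵥ u))
    (huE : uE = g₁⁻¹ *ᵥ (g₂ *ᵥ (g₁ *ᵥ u)))
    -- the eigenvector of the outgoing under-segment
    (v₂' : Fin 2 → ℂ) (hv₂' : v₂' = v₂ ᵥ* g₁)
    -- region parameters
    (aN aW aS aE : ℂ)
    (haN : aN = uN 0) (haW : aW = uW 0) (haS : aS = uS 0) (haE : aE = uE 0)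
    -- segment parameters (with nonzero denominators)
    (b₁ b₂ b₁' b₂' : ℂ)
    (hd₁ : v₁ ⬝ᵥ uN ≠ 0) (hd₂ : v₂ ⬝ᵥ uW ≠ 0) (hd₁' : v₁ ⬝ᵥ uE ≠ 0) (hd₂' : v₂' ⬝ᵥ uN ≠ 0)
    (hb₁ : b₁ = -(v₁ 1) / (v₁ ⬝ᵥ uN)) (hb₂ : b₂ = -(v₂ 1) / (v₂ ⬝ᵥ uW))
    (hb₁' : b₁' = -(v₁ 1) / (v₁ ⬝ᵥ uE)) (hb₂' : b₂' = -(v₂' 1) / (v₂' ⬝ᵥ uN))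
    -- ratios of region parameters
    (a₁ a₂ : ℂ) (ha₁ : a₁ = aW / aN) (ha₂ : a₂ = aS / aW)
    -- admissibility: all region and segment parameters are nonzero
    (haN0 : aN ≠ 0) (haW0 : aW ≠ 0) (haS0 : aS ≠ 0) (haE0 : aE ≠ 0)
    (hb₁0 : b₁ ≠ 0) (hb₂0 : b₂ ≠ 0) (hb₁'0 : b₁' ≠ 0) (hb₂'0 : b₂' ≠ 0) :
    (b₁' * (1 - m₂ * a₂ * (1 - b₂ / (m₁ * b₁))) = m₂ * b₂ / m₁) ∧
    (b₂' = b₁ * (1 - (m₁ / a₁) * (1 - b₂ / (m₁ * b₁)))) ∧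
    (aE = aW⁻¹ * (aN * aS - (m₁ * b₁ / b₂) * (aN - aW / m₁) * (aS - aW / m₂))) := by
  have hx1 : v₁ 1 ≠ 0 := by intro h; apply hb₁0; rw [hb₁, h]; simp
  have hy1 : v₂ 1 ≠ 0 := by intro h; apply hb₂0; rw [hb₂, h]; simp
  have e1 := congrFun hev₁ 0
  have e2 := congrFun hev₁ 1
  have e3 := congrFun hev₂ 0
  have e4 := congrFun hev₂ 1
  simp only [vecMul, dotProduct, Fin.sum_univ_two, Pi.smul_apply, smul_eq_mul] at e1 e2 e3 e4
  rw [inv_mul_eq_div, eq_div_iff hm₁] at e1 e2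
  rw [inv_mul_eq_div, eq_div_iff hm₂] at e3 e4
  have hinv : g₁⁻¹ = !![g₁ 1 1, -(g₁ 0 1); -(g₁ 1 0), g₁ 0 0] := by
    rw [Matrix.inv_def, Matrix.adjugate_fin_two, hg₁]; norm_num
  rw [Matrix.det_fin_two] at hg₁ hg₂
  have R1 : g₁ 0 0 * v₁ 1 - g₁ 0 1 * v₁ 0 = m₁ * v₁ 1 := by
    linear_combination (-(g₁ 0 0)) * e2 + g₁ 0 1 * e1 + m₁ * v₁ 1 * hg₁
  have R2 : g₁ 1 1 * v₁ 0 - g₁ 1 0 * v₁ 1 = m₁ * v₁ 0 := by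
    linear_combination (-(g₁ 1 1)) * e1 + g₁ 1 0 * e2 + m₁ * v₁ 0 * hg₁
  have K0 : v₂' ⬝ᵥ uN = v₂ ⬝ᵥ uW := by
    rw [hv₂', huN, huW, Matrix.dotProduct_mulVec]
  have K2 : v₂ 1 * (v₁ ⬝ᵥ uN) = m₁ * (v₁ 1 * (v₂ ⬝ᵥ uW))
      + m₁ * uW 0 * (v₁ 0 * v₂ 1 - v₁ 1 * v₂ 0) := by
    simp only [huN, huW, mulVec, dotProduct, Fin.sum_univ_two]
    linear_combination (-(v₂ 1 * u 0)) * e1 - (v₂ 1 * u 1) * e2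
  have K3 : v₂' 1 * (v₁ ⬝ᵥ uN) = v₁ 1 * (v₂ ⬝ᵥ uW)
      + uN 0 * m₁ * (v₁ 0 * v₂ 1 - v₁ 1 * v₂ 0) := by
    simp only [huN, huW, hv₂', mulVec, vecMul, dotProduct, Fin.sum_univ_two]
    linear_combination (-(u 0 * v₂ 0)) * R1 + (u 0 * v₂ 1) * R2
  have K4 : m₂ * (v₂ 1 * (v₁ ⬝ᵥ uE)) = m₁ * (v₁ 1 * (v₂ ⬝ᵥ uW))
      + m₁ * m₂ * uS 0 * (v₁ 0 * v₂ 1 - v₁ 1 * v₂ 0) := by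
    simp only [huW, huS, huE, hinv, mulVec, dotProduct, Fin.sum_univ_two,
      Matrix.cons_val', Matrix.cons_val_zero, Matrix.cons_val_one, Matrix.head_cons, Matrix.of_apply,
      Matrix.empty_val', Matrix.cons_val_fin_one, Matrix.head_fin_const]
    linear_combination
      (m₂ * v₂ 1 * (g₂ 0 0 * (g₁ 0 0 * u 0 + g₁ 0 1 * u 1) + g₂ 0 1 * (g₁ 1 0 * u 0 + g₁ 1 1 * u 1))) * R2
      + (m₂ * v₂ 1 * (g₂ 1 0 * (g₁ 0 0 * u 0 + g₁ 0 1 * u 1) + g₂ 1 1 * (g₁ 1 0 * u 0 + g₁ 1 1 * u 1))) * R1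
      + (m₁ * v₁ 1 * (g₁ 0 0 * u 0 + g₁ 0 1 * u 1)) * e3
      + (m₁ * v₁ 1 * (g₁ 1 0 * u 0 + g₁ 1 1 * u 1)) * e4
  have K5 : m₂ * (v₂ 1 * uE 0) = v₂ 1 * uN 0 + (m₂ * uS 0 - uW 0) * v₂' 1 := by
    simp only [huN, huW, huS, huE, hv₂', hinv, mulVec, vecMul, dotProduct, Fin.sum_univ_two,
      Matrix.cons_val', Matrix.cons_val_zero, Matrix.cons_val_one, Matrix.head_cons, Matrix.of_apply,
      Matrix.empty_val', Matrix.cons_val_fin_one, Matrix.head_fin_const]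
    linear_combination
      (-(g₁ 0 1) * (g₁ 0 0 * u 0 + g₁ 0 1 * u 1)) * e3
      + (-(g₁ 0 1) * (g₁ 1 0 * u 0 + g₁ 1 1 * u 1)) * e4
      + (v₂ 1 * u 0) * hg₁
  subst hb₁ hb₂ hb₁' hb₂' ha₁ ha₂
  rw [K0] at hd₂' ⊢
  simp only [← haN, ← haW, ← haS, ← haE] at K2 K3 K4 K5
  clear hev₁ hev₂ e1 e2 e3 e4 hinv hg₁ hg₂ R1 R2 K0 hv₁ hv₂ hb₁0 hb₂0 hb₁'0 hb₂'0
  clear haN haW haS haE huN huW huS huE hv₂'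
  set X0 := v₁ 0 with hX0
  set X1 := v₁ 1 with hX1
  set Y0 := v₂ 0 with hY0
  set Y1 := v₂ 1 with hY1
  set Y1' := v₂' 1 with hY1'
  set D1 := v₁ ⬝ᵥ uN with hD1
  set D2 := v₂ ⬝ᵥ uW with hD2
  set D1' := v₁ ⬝ᵥ uE with hD1'
  have hfr : (-Y1/D2)/(m₁*(-X1/D1)) = (Y1*D1)/(m₁*(X1*D2)) := by
    field_simp
  have hfr3 : (m₁*(-X1/D1))/(-Y1/D2) = (m₁*(X1*D2))/(Y1*D1) := by
    field_simp
  refine ⟨?_, ?_, ?_⟩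
  · rw [hfr]
    field_simp
    linear_combination (norm := ring1) (-(m₂*aS))*K2 + aW*K4
  · rw [hfr]
    field_simp
    linear_combination (norm := ring1) (-aW)*K3 + aN*K2
  · rw [hfr3]
    field_simp
    linear_combination (norm := ring1)
      (aW*D1)*K5 + (aW*(m₂*aS-aW))*K3 + (-(aN*(m₂*aS-aW)))*K2
end

section
/- Let g₁, g₂ ∈ SL₂(ℂ), let m₁, m₂ ∈ ℂ be nonzero, and let v₁, v₂ be nonzero row vectors in ℂ² with v₁·g₁ = m₁⁻¹·v₁ and v₂·g₂ = m₂⁻¹·v₂. Let u ∈ ℂ² be a column vector and set u_N := u, u_W := g₁·u, u_S := g₂·g₁·u, u_E := g₂·u, and v_{1'} := v₁·g₂⁻¹. Define region parameters a_P := (u_P)₁ for P ∈ {N, W, S, E}, segment parameters b₁ := −(v₁)₂/(v₁·u_N), b₂ := −(v₂)₂/(v₂·u_W), b_{1'} := −(v_{1'})₂/(v_{1'}·u_E), b_{2'} := −(v₂)₂/(v₂·u_N), and ratios a₁ := a_W/a_N, a₂ := a_S/a_W. Assume all of a_N, a_W, a_S, a_E, b₁, b₂, b_{1'}, b_{2'}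 are defined (nonzero denominators) and nonzero. Then: (i) b_{1'} = (m₂·b₂/m₁)·(1 − (a₂/m₂)·(1 − m₁·b₁/b₂)); (ii) b_{2'}·(1 − (1/(m₁·a₁))·(1 − m₁·b₁/b₂)) = b₁; (iii) a_E = a_W⁻¹·( a_N·a_S − (b₂/(m₁·b₁))·(a_N − m₁·a_W)·(a_S − m₂·a_W) ). -/
open Matrix

set_option maxHeartbeats 4000000 in
lemma key_scalar (m₁ m₂ p q r s x y A B C D E F G H dN dW dN2 aW aS : ℂ)
    (hm₁ : m₁ ≠ 0) (hm₂ : m₂ ≠ 0) (hq : q ≠ 0) (hs : s ≠ 0)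
    (h1 : p*A + q*C = m₁⁻¹ * p) (h2 : p*B + q*D = m₁⁻¹ * q)
    (h3 : r*E + s*G = m₂⁻¹ * r) (h4 : r*F + s*H = m₂⁻¹ * s)
    (hdet1 : A*D - B*C = 1) (hdet2 : E*H - F*G = 1)
    (hdN : dN = p*x + q*y) (hdW : dW = r*(A*x+B*y) + s*(C*x+D*y))
    (hdN2 : dN2 = r*x + s*y) (haW : aW = A*x + B*y)
    (haS : aS = E*(A*x+B*y) + F*(C*x+D*y))
    (hdN0 : dN ≠ 0) (hdW0 : dW ≠ 0) (hdN20 : dN2 ≠ 0)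
    (hx : x ≠ 0) (haW0 : aW ≠ 0) :
    (-(-(p*F) + q*E) / dN
      = (m₂ * (-s / dW) / m₁) * (1 - (aS / aW / m₂) * (1 - m₁ * (-q / dN) / (-s / dW))))
    ∧ ((-s / dN2) * (1 - (1 / (m₁ * (aW / x))) * (1 - m₁ * (-q / dN) / (-s / dW))) = -q / dN)
    ∧ (E*x+F*y = aW⁻¹ * (x * aS - ((-s / dW) / (m₁ * (-q / dN))) * (x - m₁ * aW) * (aS - m₂ * aW))) := by
  have h1' : m₁ * (p*A + q*C) = p := by rw [h1]; field_simp
  have h2' : m₁ * (p*B + q*D) = q := by rw [h2]; field_simp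
  have h3' : m₂ * (r*E + s*G) = r := by rw [h3]; field_simp
  have h4' : m₂ * (r*F + s*H) = s := by rw [h4]; field_simp
  obtain ⟨π, rfl⟩ : ∃ π, p = q * π := ⟨p/q, by field_simp⟩
  obtain ⟨β, rfl⟩ : ∃ β, B = q * β := ⟨B/q, by field_simp⟩
  obtain ⟨ρ, rfl⟩ : ∃ ρ, r = s * ρ := ⟨r/s, by field_simp⟩
  obtain ⟨φ, rfl⟩ : ∃ φ, F = s * φ := ⟨F/s, by field_simp⟩
  have hA : A = m₁ + q*π*β := mul_left_cancel₀ hq (by linear_combination (q*β)*h1' - A*h2' + m₁*q*hdet1)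
  subst hA
  have hD : D = m₁⁻¹ - q*π*β := mul_left_cancel₀ hq (by linear_combination h2)
  subst hD
  have hC : C = π*(m₁⁻¹ - m₁ - q*π*β) := mul_left_cancel₀ hq (by linear_combination h1)
  subst hC
  have hE : E = m₂ + s*ρ*φ := mul_left_cancel₀ hs (by linear_combination (s*φ)*h3' - E*h4' + m₂*s*hdet2)
  subst hE
  have hH : H = m₂⁻¹ - s*ρ*φ := mul_left_cancel₀ hs (by linear_combination h4)
  subst hH
  have hG : G = ρ*(m₂⁻¹ - m₂ - s*ρ*φ) := mul_left_cancel₀ hs (by linear_combination h3)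
  subst hG
  clear h1 h2 h3 h4 h1' h2' h3' h4' hdet1 hdet2
  refine ⟨?_, ?_, ?_⟩
  · field_simp
    subst hdN hdW haW haS
    field_simp
    ring
  · field_simp
    subst hdN hdW hdN2 haW
    field_simp
    ring
  · field_simp
    subst hdN hdW haW haS
    field_simp
    ring

/-- The octahedral-coordinate relations at a negative crossing of a
shadow-colored tangle diagram, in terms of the region parameters `a_P := (u_P)₁`,
segment parameters `b := −(v)₂/(v·u)`, and meridian parameters `m₁, m₂`. -/
theorem stmt_13 (g₁ g₂ : Matrix (Fin 2) (Fin 2) ℂ)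
    (hg₁ : g₁.det = 1) (hg₂ : g₂.det = 1)
    (m₁ m₂ : ℂ) (hm₁ : m₁ ≠ 0) (hm₂ : m₂ ≠ 0)
    (v₁ v₂ : Fin 2 → ℂ) (hv₁ : v₁ ≠ 0) (hv₂ : v₂ ≠ 0)
    (hev₁ : v₁ ᵥ* g₁ = m₁⁻¹ • v₁) (hev₂ : v₂ ᵥ* g₂ = m₂⁻¹ • v₂)
    (u : Fin 2 → ℂ)
    -- the shadow colors of the four regions around the crossing
    (uN uW uS uE : Fin 2 → ℂ)
    (huN : uN = u) (huW : uW = g₁ *ᵥ u) (huS : uS = g₂ *ᵥ (g₁ *ᵥ u))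
    (huE : uE = g₂ *ᵥ u)
    -- the eigenvector of the outgoing under-segment
    (v₁' : Fin 2 → ℂ) (hv₁' : v₁' = v₁ ᵥ* g₂⁻¹)
    -- region parameters
    (aN aW aS aE : ℂ)
    (haN : aN = uN 0) (haW : aW = uW 0) (haS : aS = uS 0) (haE : aE = uE 0)
    -- segment parameters (with nonzero denominators)
    (b₁ b₂ b₁' b₂' : ℂ)
    (hd₁ : v₁ ⬝ᵥ uN ≠ 0) (hd₂ : v₂ ⬝ᵥ uW ≠ 0) (hd₁' : v₁' ⬝ᵥ uE ≠ 0) (hd₂' : v₂ ⬝ᵥ uN ≠ 0)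
    (hb₁ : b₁ = -(v₁ 1) / (v₁ ⬝ᵥ uN)) (hb₂ : b₂ = -(v₂ 1) / (v₂ ⬝ᵥ uW))
    (hb₁' : b₁' = -(v₁' 1) / (v₁' ⬝ᵥ uE)) (hb₂' : b₂' = -(v₂ 1) / (v₂ ⬝ᵥ uN))
    -- ratios of region parameters
    (a₁ a₂ : ℂ) (ha₁ : a₁ = aW / aN) (ha₂ : a₂ = aS / aW)
    -- admissibility: all region and segment parameters are nonzero
    (haN0 : aN ≠ 0) (haW0 : aW ≠ 0) (haS0 : aS ≠ 0) (haE0 : aE ≠ 0)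
    (hb₁0 : b₁ ≠ 0) (hb₂0 : b₂ ≠ 0) (hb₁'0 : b₁' ≠ 0) (hb₂'0 : b₂' ≠ 0) :
    (b₁' = (m₂ * b₂ / m₁) * (1 - (a₂ / m₂) * (1 - m₁ * b₁ / b₂))) ∧
    (b₂' * (1 - (1 / (m₁ * a₁)) * (1 - m₁ * b₁ / b₂)) = b₁) ∧
    (aE = aW⁻¹ * (aN * aS - (b₂ / (m₁ * b₁)) * (aN - m₁ * aW) * (aS - m₂ * aW))) := by
  -- scalar abbreviations
  set p := v₁ 0 with hp
  set q := v₁ 1 with hqd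
  set r := v₂ 0 with hr
  set s := v₂ 1 with hsd
  set x := u 0 with hx
  set y := u 1 with hy
  set A := g₁ 0 0 with hAd
  set B := g₁ 0 1 with hBd
  set C := g₁ 1 0 with hCd
  set D := g₁ 1 1 with hDd
  set E := g₂ 0 0 with hEd
  set F := g₂ 0 1 with hFd
  set G := g₂ 1 0 with hGd
  set H := g₂ 1 1 with hHd
  -- eigen equations componentwise
  have h1 : p*A + q*C = m₁⁻¹ * p := by
    have := congrFun hev₁ 0
    simp [Matrix.vecMul, dotProduct, Fin.sum_univ_two] at this
    linear_combination this
  have h2 : p*B + q*D = m₁⁻¹ * q := by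
    have := congrFun hev₁ 1
    simp [Matrix.vecMul, dotProduct, Fin.sum_univ_two] at this
    linear_combination this
  have h3 : r*E + s*G = m₂⁻¹ * r := by
    have := congrFun hev₂ 0
    simp [Matrix.vecMul, dotProduct, Fin.sum_univ_two] at this
    linear_combination this
  have h4 : r*F + s*H = m₂⁻¹ * s := by
    have := congrFun hev₂ 1
    simp [Matrix.vecMul, dotProduct, Fin.sum_univ_two] at this
    linear_combination this
  have hdet1 : A*D - B*C = 1 := by rw [Matrix.det_fin_two] at hg₁; linear_combination hg₁
  have hdet2 : E*H - F*G = 1 := by rw [Matrix.det_fin_two] at hg₂; linear_combination hg₂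
  -- nonzeroness of eigenvector second entries
  have hq : q ≠ 0 := by
    intro h
    apply hb₁0
    rw [hb₁, h]
    simp
  have hs : s ≠ 0 := by
    intro h
    apply hb₂0
    rw [hb₂, h]
    simp
  -- dot products in scalar form
  have edN : v₁ ⬝ᵥ uN = p*x + q*y := by
    rw [huN]; simp [dotProduct, Fin.sum_univ_two]; rfl
  have edW : v₂ ⬝ᵥ uW = r*(A*x+B*y) + s*(C*x+D*y) := by
    rw [huW]; simp [dotProduct, Matrix.mulVec, Fin.sum_univ_two]; rfl
  have edN2 : v₂ ⬝ᵥ uN = r*x + s*y := by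
    rw [huN]; simp [dotProduct, Fin.sum_univ_two]; rfl
  -- the inverse matrix
  have hinv : g₂⁻¹ = g₂.adjugate := by
    rw [Matrix.inv_def, hg₂]
    simp
  have ev₁'1 : v₁' 1 = -(p*F) + q*E := by
    rw [hv₁', hinv, Matrix.adjugate_fin_two]
    simp [Matrix.vecMul, dotProduct, Fin.sum_univ_two]; rfl
  have edE : v₁' ⬝ᵥ uE = p*x + q*y := by
    rw [hv₁', huE, Matrix.dotProduct_mulVec, Matrix.vecMul_vecMul,
      Matrix.nonsing_inv_mul g₂ (by simp [hg₂]), Matrix.vecMul_one]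
    simp [dotProduct, Fin.sum_univ_two]; rfl
  -- region parameters in scalar form
  have eaN : aN = x := by rw [haN, huN]
  have eaW : aW = A*x + B*y := by
    rw [haW, huW]; simp [Matrix.mulVec, dotProduct, Fin.sum_univ_two]; rfl
  have eaS : aS = E*(A*x+B*y) + F*(C*x+D*y) := by
    rw [haS, huS]; simp [Matrix.mulVec, dotProduct, Fin.sum_univ_two]; rfl
  have eaE : aE = E*x + F*y := by
    rw [haE, huE]; simp [Matrix.mulVec, dotProduct, Fin.sum_univ_two]; rfl
  -- segment parameters in scalar form
  have eb₁ : b₁ = -q / (p*x+q*y) := by rw [hb₁, edN]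
  have eb₂ : b₂ = -s / (r*(A*x+B*y) + s*(C*x+D*y)) := by rw [hb₂, edW]
  have eb₁' : b₁' = -(-(p*F) + q*E) / (p*x+q*y) := by rw [hb₁', ev₁'1, edE]
  have eb₂' : b₂' = -s / (r*x+s*y) := by rw [hb₂', edN2]
  have ea₁ : a₁ = (A*x+B*y) / x := by rw [ha₁, eaW, eaN]
  have ea₂ : a₂ = (E*(A*x+B*y) + F*(C*x+D*y)) / (A*x+B*y) := by rw [ha₂, eaS, eaW]
  -- nonzeroness transported
  have hdN0 : (p*x+q*y : ℂ) ≠ 0 := edN ▸ hd₁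
  have hdW0 : (r*(A*x+B*y) + s*(C*x+D*y) : ℂ) ≠ 0 := edW ▸ hd₂
  have hdN20 : (r*x+s*y : ℂ) ≠ 0 := edN2 ▸ hd₂'
  have hx0 : x ≠ 0 := eaN ▸ haN0
  have hW0 : (A*x+B*y : ℂ) ≠ 0 := eaW ▸ haW0
  obtain ⟨G1, G2, G3⟩ := key_scalar m₁ m₂ p q r s x y A B C D E F G H
    (p*x+q*y) (r*(A*x+B*y) + s*(C*x+D*y)) (r*x+s*y) (A*x+B*y)
    (E*(A*x+B*y) + F*(C*x+D*y))
    hm₁ hm₂ hq hs h1 h2 h3 h4 hdet1 hdet2 rfl rfl rfl rfl rfl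
    hdN0 hdW0 hdN20 hx0 hW0
  refine ⟨?_, ?_, ?_⟩
  · rw [eb₁', eb₂, eb₁, ea₂]; exact G1
  · rw [eb₂', eb₁, eb₂, ea₁]; exact G2
  · rw [eaE, eaW, eaN, eaS, eb₂, eb₁]; exact G3
end
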